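/- Let H be a d-dimensional distribution function and ℓ ∈ {1,…,d−1}. If the ℓ-th order iterated partial derivatives of H in the first ℓ coordinates exist and are continuous, then for every fixed x ∈ ℝ^ℓ the function F_x(y) := ∂^ℓ H(x,y)/∂x₁ ∂x₂ ⋯ ∂x_ℓ is (d−ℓ)-increasing, i.e. V_{F_x}((a,b]) ≥ 0 for all a, b ∈ ℝ^{d−ℓ} with b_j ≥ a_j for all j. -/

import Mathlib

open MeasureTheory ProbabilityTheory Set Filter Topology
open scoped ENNReal

noncomputable section

/-- The lower-left orthant `(−∞, y] = (−∞,y₁] × ⋯ × (−∞,y_k]` in `ℝ^k`. -/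
def orthant {k : ℕ} (y : Fin k → ℝ) : Set (Fin k → ℝ) := {t | ∀ i, t i ≤ y i}

/-- The iterated partial derivative of `H(x, y)` in the first `j` of the `x`-coordinates:
`partialD H j = ∂^j H / ∂x_j ⋯ ∂x_1`. -/
noncomputable def partialD {l m : ℕ} (H : (Fin l → ℝ) → (Fin m → ℝ) → ℝ) :
    ℕ → (Fin l → ℝ) → (Fin m → ℝ) → ℝ
  | 0 => H
  | j + 1 => fun x y =>
      if h : j < l then
        deriv (fun t => partialD H j (Function.update x ⟨j, h⟩ t) y) (x ⟨j, h⟩)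
      else 0

/-- The `G`-volume `V_G((a,b]) = Σ_{v ∈ ver((a,b])} sign(v)·G(v)` of the box `(a, b]`,
where the sign is `+1` if `v_j = a_j` for an even number of indices and `−1`
otherwise. -/
def gVolume {m : ℕ} (G : (Fin m → ℝ) → ℝ) (a b : Fin m → ℝ) : ℝ :=
  ∑ v : Fin m → Bool,
    (-1 : ℝ) ^ (Finset.univ.filter (fun j : Fin m => v j = false)).card *
      G (fun j => if v j then b j else a j)

/-- Iterated finite difference in coordinates `l-n, …, l-1`. -/
noncomputable def mdiff {l : ℕ} : ℕ → ((Fin l → ℝ) → ℝ) → (Fin l → ℝ) → (Fin l → ℝ) →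
    (Fin l → ℝ) → ℝ
  | 0, f, _, _, x => f x
  | (n+1), f, u, w, x =>
      if h : l - (n+1) < l then
        mdiff n f u w (Function.update x ⟨l - (n+1), h⟩ (w ⟨l - (n+1), h⟩))
          - mdiff n f u w (Function.update x ⟨l - (n+1), h⟩ (u ⟨l - (n+1), h⟩))
      else f x

lemma sign_prod {ι : Type*} [Fintype ι] (v : ι → Bool) :
    ((-1 : ℝ) ^ (Finset.univ.filter (fun j => v j = false)).card)
      = ∏ i, (if v i then (1:ℝ) else -1) := by
  have : ∀ i : ι, (if v i then (1:ℝ) else -1) = (-1 : ℝ) ^ (if v i = false then 1 else 0) := by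
    intro i; cases h : v i <;> simp
  rw [Finset.prod_congr rfl (fun i _ => this i), Finset.prod_pow_eq_pow_sum]
  congr 1
  rw [Finset.sum_boole]
  simp

lemma corner_sum_eq {ι : Type*} [Fintype ι] [DecidableEq ι] (a b t : ι → ℝ)
    (hab : ∀ i, a i ≤ b i) :
    ∑ v : ι → Bool, (-1 : ℝ) ^ (Finset.univ.filter (fun j => v j = false)).card *
        (if ∀ i, t i ≤ (if v i then b i else a i) then (1:ℝ) else 0)
      = if ∀ i, t i ∈ Set.Ioc (a i) (b i) then (1:ℝ) else 0 := by
  have key : ∀ v : ι → Bool,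
      (-1 : ℝ) ^ (Finset.univ.filter (fun j => v j = false)).card *
        (if ∀ i, t i ≤ (if v i then b i else a i) then (1:ℝ) else 0)
      = ∏ i, (if v i then (if t i ≤ b i then (1:ℝ) else 0)
              else -(if t i ≤ a i then (1:ℝ) else 0)) := by
    intro v
    rw [sign_prod, ← Fintype.prod_boole, ← Finset.prod_mul_distrib]
    refine Finset.prod_congr rfl fun i _ => ?_
    cases h : v i
    · simp only [h, Bool.false_eq_true, if_false]
      split_ifs <;> ring
    · simp [h]
  rw [Finset.sum_congr rfl fun v _ => key v,
    ← Fintype.prod_sum (fun (i : ι) (bo : Bool) =>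
      if bo then (if t i ≤ b i then (1:ℝ) else 0) else -(if t i ≤ a i then (1:ℝ) else 0))]
  rw [← Fintype.prod_boole]
  refine Finset.prod_congr rfl fun i _ => ?_
  rw [Fintype.sum_bool]
  have := hab i
  by_cases h1 : t i ≤ a i <;> by_cases h2 : t i ≤ b i <;>
    simp [h1, h2, Set.mem_Ioc] <;>
      first
        | (split_ifs with h3 <;> first | rfl | linarith)
        | linarith

lemma measurableSet_pi_forall {k : ℕ} (s : Fin k → Set ℝ) (hs : ∀ i, MeasurableSet (s i)) :
    MeasurableSet {t : Fin k → ℝ | ∀ i, t i ∈ s i} := by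
  rw [show {t : Fin k → ℝ | ∀ i, t i ∈ s i} = ⋂ i, (fun t => t i) ⁻¹' (s i) from by ext; simp]
  exact MeasurableSet.iInter fun i => (measurable_pi_apply i) (hs i)

lemma measurableSet_pi_forall' {k : ℕ} (p : Fin k → Prop) [DecidablePred p]
    (s : Fin k → Set ℝ) (hs : ∀ i, MeasurableSet (s i)) :
    MeasurableSet {t : Fin k → ℝ | ∀ i, p i → t i ∈ s i} := by
  rw [show {t : Fin k → ℝ | ∀ i, p i → t i ∈ s i} = ⋂ i, {t | p i → t i ∈ s i} from by
    ext; simp]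
  refine MeasurableSet.iInter fun i => ?_
  by_cases h : p i
  · rw [show {t : Fin k → ℝ | p i → t i ∈ s i} = (fun t => t i) ⁻¹' (s i) from by
      ext t; simp [h]]
    exact (measurable_pi_apply i) (hs i)
  · rw [show {t : Fin k → ℝ | p i → t i ∈ s i} = Set.univ from by ext t; simp [h]]
    exact MeasurableSet.univ

lemma gvol_measure {γ : Type*} [MeasurableSpace γ] (μ : Measure γ) [IsFiniteMeasure μ]
    {ι : Type*} [Fintype ι] [DecidableEq ι]
    (A : Set γ) (hA : MeasurableSet A) (φ : ι → γ → ℝ) (hφ : ∀ i, Measurable (φ i))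
    (a b : ι → ℝ) (hab : ∀ i, a i ≤ b i) :
    ∑ v : ι → Bool, (-1 : ℝ) ^ (Finset.univ.filter (fun j => v j = false)).card *
        (μ (A ∩ {p | ∀ i, φ i p ≤ (if v i then b i else a i)})).toReal
      = (μ (A ∩ {p | ∀ i, φ i p ∈ Set.Ioc (a i) (b i)})).toReal := by
  have hS : ∀ c : ι → ℝ, MeasurableSet (A ∩ {p | ∀ i, φ i p ≤ c i}) := by
    intro c
    refine hA.inter ?_
    rw [show {p | ∀ i, φ i p ≤ c i} = ⋂ i, {p | φ i p ≤ c i} from by ext; simp]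
    exact MeasurableSet.iInter fun i => measurableSet_le (hφ i) measurable_const
  have hBox : MeasurableSet (A ∩ {p | ∀ i, φ i p ∈ Set.Ioc (a i) (b i)}) := by
    refine hA.inter ?_
    rw [show {p | ∀ i, φ i p ∈ Set.Ioc (a i) (b i)}
        = ⋂ i, (φ i) ⁻¹' (Set.Ioc (a i) (b i)) from by ext; simp]
    exact MeasurableSet.iInter fun i => (hφ i) measurableSet_Ioc
  calc
    ∑ v : ι → Bool, (-1 : ℝ) ^ (Finset.univ.filter (fun j => v j = false)).card *
        (μ (A ∩ {p | ∀ i, φ i p ≤ (if v i then b i else a i)})).toReal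
      = ∑ v : ι → Bool, ∫ p, (-1 : ℝ) ^ (Finset.univ.filter (fun j => v j = false)).card *
          Set.indicator (A ∩ {p | ∀ i, φ i p ≤ (if v i then b i else a i)}) 1 p ∂μ := by
        refine Finset.sum_congr rfl fun v _ => ?_
        rw [integral_const_mul, integral_indicator_one (hS _), measureReal_def]
    _ = ∫ p, ∑ v : ι → Bool, (-1 : ℝ) ^ (Finset.univ.filter (fun j => v j = false)).card *
          Set.indicator (A ∩ {p | ∀ i, φ i p ≤ (if v i then b i else a i)}) 1 p ∂μ := by
        refine (integral_finset_sum _ fun v _ => ?_).symm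
        exact (((integrable_const (1:ℝ)).indicator (hS _)).const_mul _)
    _ = ∫ p, Set.indicator (A ∩ {p | ∀ i, φ i p ∈ Set.Ioc (a i) (b i)}) 1 p ∂μ := by
        refine integral_congr_ae (ae_of_all _ fun p => ?_)
        classical
        have hrw : ∀ S : Set γ, Set.indicator S (1 : γ → ℝ) p = if p ∈ S then 1 else 0 := by
          intro S; by_cases h : p ∈ S <;> simp [h]
        simp only [hrw, Set.mem_inter_iff, Set.mem_setOf_eq]
        by_cases hpA : p ∈ A
        · simp only [hpA, true_and]
          exact corner_sum_eq a b (fun i => φ i p) hab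
        · simp [hpA]
    _ = (μ (A ∩ {p | ∀ i, φ i p ∈ Set.Ioc (a i) (b i)})).toReal := integral_indicator_one hBox

lemma monotone_hasDerivAt_nonneg {g : ℝ → ℝ} {c x : ℝ} (hg : Monotone g)
    (h : HasDerivAt g c x) : 0 ≤ c := by
  have h' := hasDerivAt_iff_tendsto_slope.mp h
  have h2 : Tendsto (slope g x) (𝓝[>] x) (𝓝 c) :=
    h'.mono_left (nhdsWithin_mono x fun y hy => ne_of_gt hy)
  refine ge_of_tendsto h2 ?_
  filter_upwards [self_mem_nhdsWithin] with y hy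
  rw [slope_def_field]
  have h3 : 0 ≤ g y - g x := sub_nonneg.mpr (hg hy.le)
  have h4 : 0 < y - x := sub_pos.mpr hy
  exact div_nonneg h3 h4.le

lemma mdiff_congr {l : ℕ} (f : (Fin l → ℝ) → ℝ) (n : ℕ) :
    ∀ u w u' w' : Fin l → ℝ,
      (∀ i : Fin l, l - n ≤ (i : ℕ) → u i = u' i) →
      (∀ i : Fin l, l - n ≤ (i : ℕ) → w i = w' i) →
      ∀ x, mdiff n f u w x = mdiff n f u' w' x := by
  induction n with
  | zero => intro u w u' w' _ _ x; rfl
  | succ n ih =>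
    intro u w u' w' hu hw x
    simp only [mdiff]
    by_cases h : l - (n+1) < l
    · rw [dif_pos h, dif_pos h]
      rw [hw ⟨l - (n+1), h⟩ (le_refl _), hu ⟨l - (n+1), h⟩ (le_refl _)]
      rw [ih u w u' w' (fun i hi => hu i (le_trans (by omega) hi))
            (fun i hi => hw i (le_trans (by omega) hi)),
          ih u w u' w' (fun i hi => hu i (le_trans (by omega) hi))
            (fun i hi => hw i (le_trans (by omega) hi))]
    · rw [dif_neg h, dif_neg h]

lemma mdiff_hasDerivAt {l : ℕ} (f f' : (Fin l → ℝ) → ℝ) (u w : Fin l → ℝ)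
    (j : ℕ) (hj : j < l)
    (hd : ∀ z : Fin l → ℝ,
      HasDerivAt (fun t => f (Function.update z ⟨j, hj⟩ t)) (f' z) (z ⟨j, hj⟩)) :
    ∀ n, n + j + 1 ≤ l → ∀ z : Fin l → ℝ,
      HasDerivAt (fun t => mdiff n f u w (Function.update z ⟨j, hj⟩ t))
        (mdiff n f' u w z) (z ⟨j, hj⟩) := by
  intro n
  induction n with
  | zero => intro _ z; exact hd z
  | succ n ih =>
    intro hn z
    have h0 : l - (n+1) < l := by omega
    have hne : (⟨l - (n+1), h0⟩ : Fin l) ≠ ⟨j, hj⟩ := by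
      intro e
      have := congrArg Fin.val e
      simp only at this
      omega
    have hfun : (fun t => mdiff (n+1) f u w (Function.update z ⟨j, hj⟩ t))
        = fun t =>
          mdiff n f u w (Function.update
            (Function.update z ⟨l - (n+1), h0⟩ (w ⟨l - (n+1), h0⟩)) ⟨j, hj⟩ t)
          - mdiff n f u w (Function.update
            (Function.update z ⟨l - (n+1), h0⟩ (u ⟨l - (n+1), h0⟩)) ⟨j, hj⟩ t) := by
      funext t
      simp only [mdiff, dif_pos h0]
      rw [Function.update_comm hne.symm, Function.update_comm hne.symm]
    rw [hfun]
    have h1 := ih (by omega) (Function.update z ⟨l - (n+1), h0⟩ (w ⟨l - (n+1), h0⟩))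
    have h2 := ih (by omega) (Function.update z ⟨l - (n+1), h0⟩ (u ⟨l - (n+1), h0⟩))
    rw [Function.update_of_ne hne.symm] at h1 h2
    have h3 := h1.sub h2
    have hgoal : mdiff (n+1) f' u w z
        = mdiff n f' u w (Function.update z ⟨l - (n+1), h0⟩ (w ⟨l - (n+1), h0⟩))
          - mdiff n f' u w (Function.update z ⟨l - (n+1), h0⟩ (u ⟨l - (n+1), h0⟩)) := by
      simp only [mdiff, dif_pos h0]
    rw [hgoal]
    exact h3

lemma lemB {l m : ℕ} (μ : Measure ((Fin l → ℝ) × (Fin m → ℝ))) [IsFiniteMeasure μ]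
    (B : Set (Fin m → ℝ)) (hB : MeasurableSet B) (u w : Fin l → ℝ) (huw : ∀ i, u i ≤ w i) :
    ∀ n, n ≤ l → ∀ x : Fin l → ℝ,
      mdiff n (fun z => (μ ({t | ∀ i, t i ≤ z i} ×ˢ B)).toReal) u w x
        = (μ ({t | (∀ i : Fin l, (i : ℕ) < l - n → t i ≤ x i) ∧
              (∀ i : Fin l, l - n ≤ (i : ℕ) → t i ∈ Set.Ioc (u i) (w i))} ×ˢ B)).toReal := by
  classical
  have hmeas : ∀ (c : Fin l → ℝ) (k : ℕ),
      MeasurableSet {t : Fin l → ℝ | (∀ i : Fin l, (i : ℕ) < k → t i ≤ c i) ∧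
        (∀ i : Fin l, k ≤ (i : ℕ) → t i ∈ Set.Ioc (u i) (w i))} := by
    intro c k
    rw [Set.setOf_and]
    exact (measurableSet_pi_forall' (fun i => (i : ℕ) < k) (fun i => Set.Iic (c i))
        (fun i => measurableSet_Iic)).inter
      (measurableSet_pi_forall' (fun i => k ≤ (i : ℕ)) (fun i => Set.Ioc (u i) (w i))
        (fun i => measurableSet_Ioc))
  intro n
  induction n with
  | zero =>
    intro _ x
    show (μ ({t | ∀ i, t i ≤ x i} ×ˢ B)).toReal = _
    congr 3
    ext t
    simp only [Set.mem_setOf_eq]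
    constructor
    · intro h
      exact ⟨fun i _ => h i, fun i hi => absurd hi (by omega)⟩
    · intro h i
      exact h.1 i (by omega)
  | succ n ih =>
    intro hn x
    have h0 : l - (n+1) < l := by omega
    show (if h : l - (n+1) < l then _ else _) = _
    rw [dif_pos h0]
    rw [ih (by omega), ih (by omega)]
    set j0 : Fin l := ⟨l - (n+1), h0⟩ with hj0
    have hj0v : (j0 : ℕ) = l - (n+1) := rfl
    set Sw : Set (Fin l → ℝ) := {t | (∀ i : Fin l, (i : ℕ) < l - n →
        t i ≤ Function.update x j0 (w j0) i) ∧
        (∀ i : Fin l, l - n ≤ (i : ℕ) → t i ∈ Set.Ioc (u i) (w i))} with hSw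
    set Su : Set (Fin l → ℝ) := {t | (∀ i : Fin l, (i : ℕ) < l - n →
        t i ≤ Function.update x j0 (u j0) i) ∧
        (∀ i : Fin l, l - n ≤ (i : ℕ) → t i ∈ Set.Ioc (u i) (w i))} with hSu
    set T : Set (Fin l → ℝ) := {t | (∀ i : Fin l, (i : ℕ) < l - (n+1) → t i ≤ x i) ∧
        (∀ i : Fin l, l - (n+1) ≤ (i : ℕ) → t i ∈ Set.Ioc (u i) (w i))} with hT
    have hsub : Su ⊆ Sw := by
      intro t ht
      refine ⟨fun i hi => ?_, ht.2⟩
      have h1 := ht.1 i hi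
      by_cases hij : i = j0
      · subst hij
        rw [Function.update_self] at h1 ⊢
        exact h1.trans (huw _)
      · rwa [Function.update_of_ne hij] at h1 ⊢
    have hdiffT : Sw \ Su = T := by
      ext t
      simp only [Set.mem_diff, hSw, hSu, hT, Set.mem_setOf_eq]
      constructor
      · rintro ⟨⟨h1, h2⟩, h3⟩
        have hgt : u j0 < t j0 := by
          by_contra hle
          push_neg at hle
          refine h3 ⟨fun i hi => ?_, h2⟩
          by_cases hij : i = j0
          · subst hij; rwa [Function.update_self]
          · rw [Function.update_of_ne hij]
            have := h1 i hi
            rwa [Function.update_of_ne hij] at this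
        refine ⟨fun i hi => ?_, fun i hi => ?_⟩
        · have hne : i ≠ j0 := by
            intro e; rw [e, hj0v] at hi; omega
          have := h1 i (by omega)
          rwa [Function.update_of_ne hne] at this
        · by_cases hij : i = j0
          · subst hij
            refine ⟨hgt, ?_⟩
            have := h1 j0 (by rw [hj0v]; omega)
            rwa [Function.update_self] at this
          · have hiv : l - n ≤ (i : ℕ) := by
              have : (i : ℕ) ≠ l - (n+1) := fun e => hij (Fin.ext e)
              omega
            exact h2 i hiv
      · rintro ⟨hlt, hioc⟩
        have hj0mem : t j0 ∈ Set.Ioc (u j0) (w j0) := hioc j0 (by rw [hj0v])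
        refine ⟨⟨fun i hi => ?_, fun i hi => hioc i (by omega)⟩, fun hcon => ?_⟩
        · by_cases hij : i = j0
          · subst hij; rw [Function.update_self]; exact hj0mem.2
          · rw [Function.update_of_ne hij]
            have : (i : ℕ) ≠ l - (n+1) := fun e => hij (Fin.ext e)
            exact hlt i (by omega)
        · have h1' := hcon.1 j0 (by rw [hj0v]; omega)
          rw [Function.update_self] at h1'
          exact absurd h1' (not_le.mpr hj0mem.1)
    have hunion : Sw ×ˢ B = (Su ×ˢ B) ∪ (T ×ˢ B) := by
      rw [← Set.union_prod, ← hdiffT, Set.union_diff_cancel hsub]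
    have hmeasT : MeasurableSet (T ×ˢ B) := (hmeas x (l - (n+1))).prod hB
    have hdisj : Disjoint (Su ×ˢ B) (T ×ˢ B) := by
      refine Set.disjoint_left.mpr ?_
      rintro p ⟨hp1, hp2⟩ ⟨hq1, hq2⟩
      rw [← hdiffT] at hq1
      exact hq1.2 hp1
    have hadd : μ (Sw ×ˢ B) = μ (Su ×ˢ B) + μ (T ×ˢ B) := by
      rw [hunion, measure_union hdisj hmeasT]
    have hne1 : μ (Su ×ˢ B) ≠ ⊤ := measure_ne_top μ _
    have hne2 : μ (T ×ˢ B) ≠ ⊤ := measure_ne_top μ _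
    have : (μ (Sw ×ˢ B)).toReal = (μ (Su ×ˢ B)).toReal + (μ (T ×ˢ B)).toReal := by
      rw [hadd, ENNReal.toReal_add hne1 hne2]
    rw [this]
    ring

/-- **Lemma A.2.** Let `H` be a `d`-dimensional distribution function (of the probability
measure `μ` on `ℝ^ℓ × ℝ^{d-ℓ}`) and `ℓ ∈ {1,…,d-1}`. If the `ℓ`-th order iterated
partial derivatives of `H` in the first `ℓ` coordinates exist and are continuous, then
for every fixed `x ∈ ℝ^ℓ` the function `F_x(y) = ∂^ℓ H(x,y)/∂x₁⋯∂x_ℓ` is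
`(d-ℓ)`-increasing, i.e. `V_{F_x}((a,b]) ≥ 0` whenever `a ≤ b`. -/
theorem iterated_partial_derivative_increasing
    (d l : ℕ) (hl1 : 1 ≤ l) (hl2 : l ≤ d - 1)
    (μ : Measure ((Fin l → ℝ) × (Fin (d - l) → ℝ))) (hμp : IsProbabilityMeasure μ)
    (H : (Fin l → ℝ) → (Fin (d - l) → ℝ) → ℝ)
    (hH : ∀ x y, H x y = (μ (orthant x ×ˢ orthant y)).toReal)
    (hderiv : ∀ (j : ℕ) (hj : j < l) (x : Fin l → ℝ) (y : Fin (d - l) → ℝ),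
      HasDerivAt (fun t => partialD H j (Function.update x ⟨j, hj⟩ t) y)
        (partialD H (j + 1) x y) (x ⟨j, hj⟩))
    (hcont : ∀ j : ℕ, j ≤ l →
      Continuous (fun p : (Fin l → ℝ) × (Fin (d - l) → ℝ) => partialD H j p.1 p.2)) :
    ∀ (x : Fin l → ℝ) (a b : Fin (d - l) → ℝ), (∀ j, a j ≤ b j) →
      0 ≤ gVolume (fun y => partialD H l x y) a b := by
  classical
  intro x a b hab
  haveI : IsFiniteMeasure μ := by haveI := hμp; infer_instance
  set Bs : Set (Fin (d - l) → ℝ) := {y | ∀ i, y i ∈ Set.Ioc (a i) (b i)} with hBs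
  have hBmeas : MeasurableSet Bs :=
    measurableSet_pi_forall _ (fun i => measurableSet_Ioc)
  have horth : ∀ z : Fin l → ℝ, MeasurableSet (orthant z) := fun z =>
    measurableSet_pi_forall (fun i => Set.Iic (z i)) (fun i => measurableSet_Iic)
  -- Φ 0 equals the measure of orthant × box
  have hPhi0 : (fun z => gVolume (fun y => partialD H 0 z y) a b)
      = fun z => (μ ({t | ∀ i, t i ≤ z i} ×ˢ Bs)).toReal := by
    funext z
    have hA : MeasurableSet (orthant z ×ˢ (Set.univ : Set (Fin (d - l) → ℝ))) :=
      (horth z).prod MeasurableSet.univ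
    have hφ : ∀ i : Fin (d - l),
        Measurable (fun p : (Fin l → ℝ) × (Fin (d - l) → ℝ) => p.2 i) :=
      fun i => (measurable_pi_apply i).comp measurable_snd
    have hset : ∀ c : Fin (d - l) → ℝ,
        (orthant z ×ˢ (Set.univ : Set (Fin (d - l) → ℝ)))
          ∩ {p | ∀ i, p.2 i ≤ c i} = orthant z ×ˢ orthant c := by
      intro c; ext p
      simp [orthant, Set.mem_prod, Set.mem_setOf_eq, and_assoc]
    have hset2 : (orthant z ×ˢ (Set.univ : Set (Fin (d - l) → ℝ)))
        ∩ {p | ∀ i, p.2 i ∈ Set.Ioc (a i) (b i)} = {t | ∀ i, t i ≤ z i} ×ˢ Bs := by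
      ext p
      simp [orthant, Set.mem_prod, Set.mem_setOf_eq, hBs]
    have hgv := gvol_measure μ (orthant z ×ˢ (Set.univ : Set (Fin (d - l) → ℝ))) hA
      (fun i p => p.2 i) hφ a b hab
    rw [hset2] at hgv
    rw [← hgv]
    simp only [gVolume, partialD]
    refine Finset.sum_congr rfl fun v _ => ?_
    rw [hH, ← hset]
  -- inductive claim
  have key : ∀ j, j ≤ l → ∀ (u w z : Fin l → ℝ), (∀ i, u i ≤ w i) →
      0 ≤ mdiff (l - j) (fun z' => gVolume (fun y => partialD H j z' y) a b) u w z := by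
    intro j
    induction j with
    | zero =>
      intro _ u w z huw
      rw [hPhi0, Nat.sub_zero, lemB μ Bs hBmeas u w huw l (le_refl l) z]
      exact ENNReal.toReal_nonneg
    | succ j ih =>
      intro hj1 u w z huw
      have hj : j < l := hj1
      have hd : ∀ z' : Fin l → ℝ,
          HasDerivAt (fun t => gVolume (fun y => partialD H j (Function.update z' ⟨j, hj⟩ t) y) a b)
            (gVolume (fun y => partialD H (j+1) z' y) a b) (z' ⟨j, hj⟩) := by
        intro z'
        simp only [gVolume]
        exact HasDerivAt.fun_sum fun v _ =>
          HasDerivAt.const_mul _ (hderiv j hj z' (fun i => if v i then b i else a i))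
      have hC := mdiff_hasDerivAt
        (fun z' => gVolume (fun y => partialD H j z' y) a b)
        (fun z' => gVolume (fun y => partialD H (j+1) z' y) a b)
        u w j hj hd (l - (j+1)) (by omega)
      have hmono : Monotone (fun t => mdiff (l - (j+1))
          (fun z' => gVolume (fun y => partialD H j z' y) a b) u w
          (Function.update z ⟨j, hj⟩ t)) := by
        intro t t' htt'
        have huw' : ∀ i, Function.update u ⟨j, hj⟩ t i ≤ Function.update w ⟨j, hj⟩ t' i := by
          intro i
          by_cases hij : i = ⟨j, hj⟩
          · subst hij; rw [Function.update_self, Function.update_self]; exact htt'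
          · rw [Function.update_of_ne hij, Function.update_of_ne hij]; exact huw i
        have hstep := ih (by omega) (Function.update u ⟨j, hj⟩ t)
          (Function.update w ⟨j, hj⟩ t') z huw'
        have hsplit : mdiff (l - j)
            (fun z' => gVolume (fun y => partialD H j z' y) a b)
            (Function.update u ⟨j, hj⟩ t) (Function.update w ⟨j, hj⟩ t') z
            = mdiff (l - (j+1))
                (fun z' => gVolume (fun y => partialD H j z' y) a b) u w
                (Function.update z ⟨j, hj⟩ t')
              - mdiff (l - (j+1))
                (fun z' => gVolume (fun y => partialD H j z' y) a b) u w
                (Function.update z ⟨j, hj⟩ t) := by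
          have hlj : l - j = (l - (j+1)) + 1 := by omega
          rw [hlj]
          have h1 : l - ((l - (j+1)) + 1) < l := by omega
          show (if h : l - ((l - (j+1)) + 1) < l then _ else _) = _
          rw [dif_pos h1]
          have hfin : (⟨l - ((l - (j+1)) + 1), h1⟩ : Fin l) = ⟨j, hj⟩ :=
            Fin.ext (by simp; omega)
          rw [hfin, Function.update_self, Function.update_self]
          have hcongr : ∀ z'' : Fin l → ℝ, mdiff (l - (j+1))
              (fun z' => gVolume (fun y => partialD H j z' y) a b)
              (Function.update u ⟨j, hj⟩ t) (Function.update w ⟨j, hj⟩ t') z''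
              = mdiff (l - (j+1))
                (fun z' => gVolume (fun y => partialD H j z' y) a b) u w z'' := by
            intro z''
            refine mdiff_congr _ _ _ _ _ _ (fun i hi => ?_) (fun i hi => ?_) z''
            · have : (i : ℕ) ≠ j := by omega
              rw [Function.update_of_ne (fun e => this (by rw [e]))]
            · have : (i : ℕ) ≠ j := by omega
              rw [Function.update_of_ne (fun e => this (by rw [e]))]
          rw [hcongr, hcongr]
        rw [hsplit] at hstep
        linarith
      have := monotone_hasDerivAt_nonneg hmono (hC z)
      exact this
  have hfin := key l (le_refl l) x x x (fun i => le_rfl)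
  rw [Nat.sub_self] at hfin
  exact hfin
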